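/- Suppose a sequence of real numbers a_0, a_1, …, a_{n−1} each bounded above by a constant A satisfies ∑_{i=0}^{n−1} a_i ≤ −ηn for some η > 0. Then for any 0 < ε < η there exists an index 0 ≤ p < n such that ∑_{i=p}^{p+k−1} a_i ≤ −(η−ε)k for every 1 ≤ k ≤ n−p. (Pliss lemma, used with a_i = log‖∧²Φ_1|_{Φ_i(E)}‖.) -/

import Mathlib

/-- Pliss lemma: if a sequence `a_0, …, a_{n−1}` bounded above by `A` satisfies
`∑ a_i ≤ −ηn`, then for any `0 < ε < η` there is an index `p < n` such that all
forward partial sums starting at `p` satisfy `∑_{i=p}^{p+k−1} a_i ≤ −(η−ε)k`. -/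
theorem pliss_lemma (a : ℕ → ℝ) (n : ℕ) (hn : 0 < n) (A η ε : ℝ)
    (hε : 0 < ε) (hεη : ε < η)
    (hbd : ∀ i < n, a i ≤ A)
    (hsum : ∑ i ∈ Finset.range n, a i ≤ -η * n) :
    ∃ p < n, ∀ k : ℕ, 1 ≤ k → k ≤ n - p →
      ∑ i ∈ Finset.Ico p (p + k), a i ≤ -(η - ε) * k := by
  set S : ℕ → ℝ := fun m => ∑ i ∈ Finset.range m, (a i + (η - ε)) with hS
  obtain ⟨p, hp, hmax⟩ := Finset.exists_max_image (Finset.range (n + 1)) S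
    ⟨0, Finset.mem_range.2 (Nat.succ_pos n)⟩
  have hS0 : S 0 = 0 := by simp [hS]
  have hSn : S n < 0 := by
    have : S n = (∑ i ∈ Finset.range n, a i) + (η - ε) * n := by
      simp [hS, Finset.sum_add_distrib, mul_comm]
      ring
    rw [this]
    have : (∑ i ∈ Finset.range n, a i) + (η - ε) * n ≤ -η * n + (η - ε) * n := by
      linarith
    have h2 : -η * (n : ℝ) + (η - ε) * n = -ε * n := by ring
    have hn' : (0 : ℝ) < n := by exact_mod_cast hn
    nlinarith
  have hpn : p < n := by
    rcases Nat.lt_or_ge p n with h | h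
    · exact h
    · exfalso
      have : p = n := le_antisymm (Nat.lt_succ_iff.1 (Finset.mem_range.1 hp)) h
      have h0 := hmax 0 (Finset.mem_range.2 (Nat.succ_pos n))
      rw [this] at h0
      linarith [hS0 ▸ h0]
  refine ⟨p, hpn, fun k hk1 hk2 => ?_⟩
  have hpk : p + k ≤ n := by omega
  have hle := hmax (p + k) (Finset.mem_range.2 (by omega))
  have hsplit : S (p + k) = S p + ∑ i ∈ Finset.Ico p (p + k), (a i + (η - ε)) := by
    simp [hS, Finset.sum_range_add_sum_Ico _ (Nat.le_add_right p k)]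
  have : ∑ i ∈ Finset.Ico p (p + k), (a i + (η - ε)) ≤ 0 := by linarith
  have hcard : ∑ i ∈ Finset.Ico p (p + k), (a i + (η - ε))
      = (∑ i ∈ Finset.Ico p (p + k), a i) + (η - ε) * k := by
    rw [Finset.sum_add_distrib]
    simp [Nat.add_sub_cancel_left, mul_comm]
    ring
  rw [hcard] at this
  linarith
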